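/- Let A be a point on the open right unit semicircle C = {(cos θ, sin θ) : -π/2 < θ < π/2}, and let L₁, L₂ be two rays from A making equal angles with the inward normal to C at A (billiard reflection), each making an angle less than π/4 with the horizontal direction, and each intersecting C only at A. Then the polar angle θ of A satisfies |θ| < π/4. -/

import Mathlib

open Real

/-- A point of the open right unit semicircle, given by its polar angle. -/
noncomputable def semicirclePt (θ : ℝ) : ℝ × ℝ := (Real.cos θ, Real.sin θ)

theorem reflection_angle_lt_pi_div_four (θ : ℝ)
    (hθ₁ : -(π / 2) < θ) (hθ₂ : θ < π / 2)
    (u₁ u₂ : ℝ × ℝ)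
    -- L₂ is the billiard reflection of L₁: u₂ is the mirror image of u₁
    -- across the radius (normal) direction at A = (cos θ, sin θ)
    (hrefl : u₂ = (2 * (u₁.1 * Real.cos θ + u₁.2 * Real.sin θ)) •
        semicirclePt θ - u₁)
    (hu₁ : u₁ ≠ 0)
    -- both rays point into the region to the left of the semicircle
    (hin₁ : u₁.1 < 0) (hin₂ : u₂.1 < 0)
    -- each ray makes an angle less than π/4 with the horizontal
    (hslope₁ : |u₁.2| < |u₁.1|) (hslope₂ : |u₂.2| < |u₂.1|)
    -- each ray intersects the semicircle only at A
    (honly₁ : ∀ t : ℝ, 0 < t → ∀ φ : ℝ, -(π / 2) < φ → φ < π / 2 →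
        semicirclePt θ + t • u₁ ≠ semicirclePt φ)
    (honly₂ : ∀ t : ℝ, 0 < t → ∀ φ : ℝ, -(π / 2) < φ → φ < π / 2 →
        semicirclePt θ + t • u₂ ≠ semicirclePt φ) :
    |θ| < π / 4 := by
  have hc : 0 < Real.cos θ := Real.cos_pos_of_mem_Ioo ⟨hθ₁, hθ₂⟩
  set c := Real.cos θ with hcdef
  set s := Real.sin θ with hsdef
  set a := u₁.1 with hadef
  set b := u₁.2 with hbdef
  set d := a * c + b * s with hddef
  have h21 : u₂.1 = 2 * d * c - a := by
    rw [hrefl]; simp [semicirclePt, Prod.smul_def]; rfl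
  have h22 : u₂.2 = 2 * d * s - b := by
    rw [hrefl]; simp [semicirclePt, Prod.smul_def]; rfl
  rw [h21] at hin₂
  rw [h21, h22] at hslope₂
  -- from hin₁ : a < 0, so |a| = -a
  have hab : |b| < -a := by rwa [abs_of_neg hin₁] at hslope₁
  have hab2 : |2 * d * s - b| < a - 2 * d * c := by
    rwa [abs_of_neg hin₂, neg_sub] at hslope₂
  -- triangle inequality
  have htri : |2 * d * s| ≤ |b| + |2 * d * s - b| := by
    have := abs_add_le b (2 * d * s - b)
    simpa using this
  have hkey : 2 * |d| * |s| < -(2 * d * c) := by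
    have : |2 * d * s| < -(2 * d * c) := by
      calc |2 * d * s| ≤ |b| + |2 * d * s - b| := htri
        _ < -a + (a - 2 * d * c) := add_lt_add hab hab2
        _ = -(2 * d * c) := by ring
    calc 2 * |d| * |s| = |2 * d * s| := by rw [abs_mul, abs_mul]; simp [abs_of_nonneg]
      _ < -(2 * d * c) := this
  have hd : d < 0 := by
    by_contra h
    push_neg at h
    nlinarith [abs_nonneg d, abs_nonneg s, abs_of_nonneg h]
  have hsc : |s| < c := by
    rw [abs_of_neg hd] at hkey
    nlinarith
  -- conclude |θ| < π/4 from |sin θ| < cos θ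
  by_contra h
  push_neg at h
  have hθabs : |θ| < π / 2 := abs_lt.2 ⟨by linarith, hθ₂⟩
  have h1 : Real.sin (π / 4) ≤ Real.sin |θ| := by
    apply Real.strictMonoOn_sin.monotoneOn
    · constructor <;> [linarith [Real.pi_pos]; linarith [Real.pi_pos]]
    · exact ⟨by linarith [abs_nonneg θ, Real.pi_pos], le_of_lt hθabs⟩
    · exact h
  have h2 : Real.cos |θ| ≤ Real.cos (π / 4) := by
    apply Real.cos_le_cos_of_nonneg_of_le_pi (by positivity : (0:ℝ) ≤ π/4)
    · linarith [Real.pi_pos]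
    · exact h
  have h3 : Real.sin |θ| = |s| := by
    rcases abs_cases θ with ⟨h', _⟩ | ⟨h', _⟩
    · rw [h', hsdef, abs_of_nonneg]
      exact Real.sin_nonneg_of_nonneg_of_le_pi (by rw [← h']; exact abs_nonneg θ)
        (by linarith [Real.pi_pos])
    · rw [h', Real.sin_neg, hsdef, abs_of_nonpos]
      have : 0 ≤ -θ := by linarith [abs_nonneg θ, h'.symm.le]
      have : Real.sin (-θ) ≥ 0 := Real.sin_nonneg_of_nonneg_of_le_pi (by linarith) (by nlinarith [Real.pi_pos, hθabs, abs_nonneg θ])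
      simpa [Real.sin_neg] using this
  have h4 : Real.cos |θ| = c := by rw [hcdef, Real.cos_abs]
  rw [Real.sin_pi_div_four] at h1
  rw [Real.cos_pi_div_four] at h2
  rw [h3] at h1
  rw [h4] at h2
  linarith
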